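/- Let K be an algebraically closed field of characteristic 2 and n ∈ ℕ. Consider the derivative of the map φ(P,Q) = PQ + P^TQ^T at the point (R, S), where R is the n×n nilpotent upper-shift matrix (ones on the superdiagonal) and S is the anti-diagonal permutation matrix (ones on the anti-diagonal). Then the linear map d_{(R,S)}φ : gl_n ⊕ gl_n → gl_n/span(E_{n,n}), (P,Q) ↦ PS + P^TS^T + RQ + R^TQ^T mod E_{n,n}, is surjective. -/

import Mathlib

open Matrix

/-- The `n × n` nilpotent upper-shift matrix, with ones on the superdiagonal. -/
noncomputable def upperShift (K : Type*) [Field K] (n : ℕ) :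
    Matrix (Fin n) (Fin n) K :=
  Matrix.of fun i j => if (i : ℕ) + 1 = (j : ℕ) then 1 else 0

/-- The `n × n` anti-diagonal permutation matrix, with ones on the anti-diagonal. -/
noncomputable def antiDiag (K : Type*) [Field K] (n : ℕ) :
    Matrix (Fin n) (Fin n) K :=
  Matrix.of fun i j => if (i : ℕ) + (j : ℕ) + 1 = n then 1 else 0

namespace DerivAux

variable {K : Type*} [Field K]

def q1 (A : ℕ → ℕ → K) : ℕ → ℕ → K
  | 0, _ => 0
  | 1, s => A 0 s
  | r+2, s => A (r+1) s + q1 A s r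
termination_by r s => r + s
decreasing_by omega

lemma q1_zero (A : ℕ → ℕ → K) (s : ℕ) : q1 A 0 s = 0 := by rw [q1]
lemma q1_one (A : ℕ → ℕ → K) (s : ℕ) : q1 A 1 s = A 0 s := by rw [q1]
lemma q1_two (A : ℕ → ℕ → K) (r s : ℕ) : q1 A (r+2) s = A (r+1) s + q1 A s r := by rw [q1]

def dRow (n : ℕ) (A : ℕ → ℕ → K) (j : ℕ) : K := A (n-1) j + q1 A j (n-2)

def pF (n : ℕ) (A : ℕ → ℕ → K) (i j : ℕ) : K :=
  if j = n-1 then dRow n A (n-1-i) + (if i = 0 then dRow n A (n-1) else 0) else 0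

def qF (n : ℕ) (A : ℕ → ℕ → K) (i j : ℕ) : K :=
  q1 A i j + (if i = 0 ∧ j + 1 ≤ n-1 then dRow n A (n-1-(j+1)) else 0)

theorem keyIdentity (h2 : ∀ x : K, x + x = 0) (n : ℕ) (A : ℕ → ℕ → K)
    (i j : ℕ) (hi : i < n) (hj : j < n) :
    pF n A i (n-1-j) + pF n A (n-1-j) i
      + (if i + 1 < n then qF n A (i+1) j else 0)
      + (if 1 ≤ i then qF n A j (i-1) else 0)
    = A i j + (if i = n-1 ∧ j = n-1 then dRow n A (n-1) else 0) := by
  rcases Nat.eq_zero_or_pos i with rfl | hi1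
  · -- i = 0
    by_cases hn1 : n = 1
    · subst hn1
      interval_cases j
      norm_num [pF, qF, dRow, q1_zero]
      linear_combination h2 (A 0 0)
    · have hn2 : 2 ≤ n := by omega
      rw [if_pos (by omega), if_neg (by omega), if_neg (by omega)]
      have hp2 : pF n A (n-1-j) 0 = 0 := by rw [pF, if_neg (by omega)]
      have hq : qF n A 1 j = A 0 j := by
        rw [qF, q1_one, if_neg (by omega), add_zero]
      rw [hp2, hq, add_zero]
      by_cases hj0 : j = 0
      · subst hj0
        rw [pF, if_pos (by omega), if_pos rfl, Nat.sub_zero]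
        linear_combination h2 (dRow n A (n-1))
      · rw [pF, if_neg (by omega)]
        ring
  · rcases Nat.lt_or_ge i (n-1) with hiN | hiN
    · -- Case A : 1 ≤ i < n-1
      obtain ⟨i', rfl⟩ : ∃ i', i = i' + 1 := ⟨i - 1, by omega⟩
      rw [if_pos (by omega), if_pos (by omega), if_neg (by omega), add_zero]
      have hp2 : pF n A (n-1-j) (i'+1) = 0 := by rw [pF, if_neg (by omega)]
      have hq1 : qF n A (i'+1+1) j = A (i'+1) j + q1 A j i' := by
        rw [qF, show i'+1+1 = i'+2 from rfl, q1_two, if_neg (by omega), add_zero]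
      rw [hp2, hq1, add_zero]
      by_cases hj0 : j = 0
      · subst hj0
        have hq2 : qF n A 0 (i'+1-1) = q1 A 0 i' + dRow n A (n-1-(i'+1)) := by
          rw [qF, show i'+1-1 = i' from rfl, if_pos ⟨rfl, by omega⟩]
        rw [hq2, pF, if_pos (by omega), if_neg (by omega), add_zero]
        linear_combination h2 (dRow n A (n-1-(i'+1))) + h2 (q1 A 0 i')
      · have hq2 : qF n A j (i'+1-1) = q1 A j i' := by
          rw [qF, show i'+1-1 = i' from rfl, if_neg (by tauto), add_zero]
        rw [hq2, pF, if_neg (by omega)]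
        linear_combination h2 (q1 A j i')
    · -- Case C : i = n-1, n ≥ 2
      have hie : i = n - 1 := by omega
      subst hie
      have hn2 : 2 ≤ n := by omega
      rw [if_neg (by omega), if_pos (by omega), add_zero]
      by_cases hjn : j = n - 1
      · subst hjn
        have hp1 : pF n A (n-1) (n-1-(n-1)) = 0 := by
          rw [pF, if_neg (by omega)]
        have hp2 : pF n A (n-1-(n-1)) (n-1) = dRow n A (n-1) + dRow n A (n-1) := by
          rw [pF, if_pos rfl, if_pos (by omega), show n-1-(n-1) = 0 by omega,
            show n-1-0 = n-1 from rfl]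
        have hq2 : qF n A (n-1) (n-1-1) = q1 A (n-1) (n-2) := by
          rw [qF, if_neg (by omega), add_zero, show n-1-1 = n-2 by omega]
        rw [hp1, hp2, hq2, if_pos ⟨rfl, rfl⟩, zero_add]
        simp only [dRow]
        linear_combination h2 (q1 A (n-1) (n-2))
      · by_cases hj0 : j = 0
        · subst hj0
          have hp1 : pF n A (n-1) (n-1-0) = dRow n A 0 := by
            rw [pF, if_pos (by omega : n-1-0 = n-1), if_neg (by omega), add_zero,
              show n-1-(n-1) = 0 by omega]
          have hp2 : pF n A (n-1-0) (n-1) = dRow n A 0 := by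
            rw [pF, if_pos rfl, if_neg (by omega), add_zero, Nat.sub_zero,
              show n-1-(n-1) = 0 by omega]
          have hq2 : qF n A 0 (n-1-1) = q1 A 0 (n-2) + dRow n A 0 := by
            rw [qF, show n-1-1 = n-2 by omega, if_pos ⟨rfl, by omega⟩,
              show n-1-(n-2+1) = 0 by omega]
          rw [hp1, hp2, hq2, if_neg (by omega)]
          simp only [dRow]
          linear_combination h2 (A (n-1) 0) + 2 * h2 (q1 A 0 (n-2))
        · have hp1 : pF n A (n-1) (n-1-j) = 0 := by
            rw [pF, if_neg (by omega)]
          have hp2 : pF n A (n-1-j) (n-1) = dRow n A j := by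
            rw [pF, if_pos rfl, if_neg (by omega), add_zero,
              show n-1-(n-1-j) = j by omega]
          have hq2 : qF n A j (n-1-1) = q1 A j (n-2) := by
            rw [qF, show n-1-1 = n-2 by omega, if_neg (by tauto), add_zero]
          rw [hp1, hp2, hq2, if_neg (by tauto), zero_add, add_zero]
          simp only [dRow]
          linear_combination h2 (q1 A j (n-2))


variable {K : Type*} [Field K] {n : ℕ}

lemma mul_antiDiag_apply (B : Matrix (Fin n) (Fin n) K) (i j : Fin n) :
    (B * antiDiag K n) i j = B i ⟨n-1-(j:ℕ), by have := j.isLt; omega⟩ := by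
  rw [Matrix.mul_apply]
  rw [Finset.sum_eq_single (⟨n-1-(j:ℕ), by have := j.isLt; omega⟩ : Fin n)]
  · rw [antiDiag, Matrix.of_apply, if_pos (by have := j.isLt; simp; omega), mul_one]
  · intro b _ hb
    have hb' : (b:ℕ) ≠ n-1-(j:ℕ) := fun h => hb (Fin.val_injective h)
    have := j.isLt; have := b.isLt
    rw [antiDiag, Matrix.of_apply, if_neg (by omega), mul_zero]
  · exact fun h => absurd (Finset.mem_univ _) h

lemma transpose_mul_antiDiag_transpose_apply (B : Matrix (Fin n) (Fin n) K) (i j : Fin n) :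
    (Bᵀ * (antiDiag K n)ᵀ) i j = B ⟨n-1-(j:ℕ), by have := j.isLt; omega⟩ i := by
  rw [Matrix.mul_apply]
  rw [Finset.sum_eq_single (⟨n-1-(j:ℕ), by have := j.isLt; omega⟩ : Fin n)]
  · rw [antiDiag, Matrix.transpose_apply, Matrix.transpose_apply, Matrix.of_apply,
      if_pos (by have := j.isLt; simp; omega), mul_one]
  · intro b _ hb
    have hb' : (b:ℕ) ≠ n-1-(j:ℕ) := fun h => hb (Fin.val_injective h)
    have := j.isLt; have := b.isLt
    rw [antiDiag, Matrix.transpose_apply, Matrix.transpose_apply, Matrix.of_apply,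
      if_neg (by omega), mul_zero]
  · exact fun h => absurd (Finset.mem_univ _) h

lemma upperShift_mul_apply (Q : Matrix (Fin n) (Fin n) K) (i j : Fin n) :
    (upperShift K n * Q) i j = if h : (i:ℕ)+1 < n then Q ⟨(i:ℕ)+1, h⟩ j else 0 := by
  rw [Matrix.mul_apply]
  by_cases h : (i:ℕ)+1 < n
  · rw [dif_pos h, Finset.sum_eq_single (⟨(i:ℕ)+1, h⟩ : Fin n)]
    · rw [upperShift, Matrix.of_apply, if_pos rfl, one_mul]
    · intro b _ hb
      have hb' : (b:ℕ) ≠ (i:ℕ)+1 := fun h' => hb (Fin.val_injective h')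
      rw [upperShift, Matrix.of_apply, if_neg (by omega), zero_mul]
    · exact fun h => absurd (Finset.mem_univ _) h
  · rw [dif_neg h]
    apply Finset.sum_eq_zero
    intro b _
    have := b.isLt
    rw [upperShift, Matrix.of_apply, if_neg (by omega), zero_mul]

lemma upperShift_transpose_mul_apply (Q : Matrix (Fin n) (Fin n) K) (i j : Fin n) :
    ((upperShift K n)ᵀ * Qᵀ) i j
      = if h : 1 ≤ (i:ℕ) then Q j ⟨(i:ℕ)-1, by have := i.isLt; omega⟩ else 0 := by
  rw [Matrix.mul_apply]
  by_cases h : 1 ≤ (i:ℕ)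
  · rw [dif_pos h, Finset.sum_eq_single (⟨(i:ℕ)-1, by have := i.isLt; omega⟩ : Fin n)]
    · rw [upperShift, Matrix.transpose_apply, Matrix.transpose_apply, Matrix.of_apply,
        if_pos (by simp; omega), one_mul]
    · intro b _ hb
      have hb' : (b:ℕ) ≠ (i:ℕ)-1 := fun h' => hb (Fin.val_injective h')
      rw [upperShift, Matrix.transpose_apply, Matrix.transpose_apply, Matrix.of_apply,
        if_neg (by omega), zero_mul]
    · exact fun h => absurd (Finset.mem_univ _) h
  · rw [dif_neg h]
    apply Finset.sum_eq_zero
    intro b _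
    rw [upperShift, Matrix.transpose_apply, Matrix.transpose_apply, Matrix.of_apply,
      if_neg (by omega), zero_mul]


end DerivAux

/-- Over an algebraically closed field of characteristic 2, the derivative
`(P, Q) ↦ PS + PᵀSᵀ + RQ + RᵀQᵀ` of `φ(P,Q) = PQ + PᵀQᵀ` at `(R, S)`, with `R` the
upper-shift matrix and `S` the anti-diagonal matrix, is surjective onto
`gl_n / span(E_{n,n})`. -/
theorem derivative_surjective_mod_corner {K : Type*} [Field K] [IsAlgClosed K]
    (hchar : ringChar K = 2) (n : ℕ) (hn : 0 < n) :
    ∀ M : Matrix (Fin n) (Fin n) K,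
      ∃ (P Q : Matrix (Fin n) (Fin n) K) (c : K),
        P * antiDiag K n + Pᵀ * (antiDiag K n)ᵀ +
          upperShift K n * Q + (upperShift K n)ᵀ * Qᵀ
          = M + c • Matrix.single
              (⟨n - 1, by omega⟩ : Fin n) (⟨n - 1, by omega⟩ : Fin n) (1 : K) := by
  intro M
  have h2 : ∀ x : K, x + x = 0 := by
    intro x
    have h20 : (2 : K) = 0 := by
      have := ringChar.Nat.cast_ringChar (R := K)
      rw [hchar] at this
      exact_mod_cast this
    rw [← two_mul, h20, zero_mul]
  set A : ℕ → ℕ → K := fun a b => if h : a < n ∧ b < n then M ⟨a, h.1⟩ ⟨b, h.2⟩ else 0 with hA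
  refine ⟨Matrix.of fun i j => DerivAux.pF n A (i:ℕ) (j:ℕ),
    Matrix.of fun i j => DerivAux.qF n A (i:ℕ) (j:ℕ), DerivAux.dRow n A (n-1), ?_⟩
  ext i j
  rw [Matrix.add_apply, Matrix.add_apply, Matrix.add_apply,
    DerivAux.mul_antiDiag_apply, DerivAux.transpose_mul_antiDiag_transpose_apply,
    DerivAux.upperShift_mul_apply, DerivAux.upperShift_transpose_mul_apply]
  have hMA : M i j = A i j := by
    simp only [hA]
    rw [dif_pos ⟨i.isLt, j.isLt⟩]
  have hstd : (DerivAux.dRow n A (n-1) • Matrix.single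
      (⟨n - 1, by omega⟩ : Fin n) (⟨n - 1, by omega⟩ : Fin n) (1 : K)) i j
      = (if (i:ℕ) = n-1 ∧ (j:ℕ) = n-1 then DerivAux.dRow n A (n-1) else 0) := by
    rw [Matrix.smul_apply, Matrix.single, Matrix.of_apply]
    by_cases h : (i:ℕ) = n-1 ∧ (j:ℕ) = n-1
    · rw [if_pos h, if_pos ⟨Fin.ext h.1.symm, Fin.ext h.2.symm⟩, smul_eq_mul, mul_one]
    · rw [if_neg h, if_neg (by
        rintro ⟨h1, h2⟩
        exact h ⟨congrArg Fin.val h1.symm, congrArg Fin.val h2.symm⟩), smul_eq_mul, mul_zero]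
  rw [Matrix.add_apply, hstd, hMA, Matrix.of_apply, Matrix.of_apply]
  have key := DerivAux.keyIdentity h2 n A (i:ℕ) (j:ℕ) i.isLt j.isLt
  by_cases h1 : (i:ℕ)+1 < n <;> by_cases h4 : 1 ≤ (i:ℕ)
  · rw [dif_pos h1, dif_pos h4, Matrix.of_apply, Matrix.of_apply]
    rw [if_pos h1, if_pos h4] at key
    exact key
  · rw [dif_pos h1, dif_neg h4, Matrix.of_apply]
    rw [if_pos h1, if_neg h4] at key
    exact key
  · rw [dif_neg h1, dif_pos h4, Matrix.of_apply]
    rw [if_neg h1, if_pos h4] at key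
    exact key
  · rw [dif_neg h1, dif_neg h4]
    rw [if_neg h1, if_neg h4] at key
    exact key
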